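/- The relations ◁ and ◀ on Pre(X) are partial orders. For a fixed preorder P on X: (a) (underline(P), ◁) and (overline(P), ◀) are partially ordered sets whose order is induced from (Pre(X), ⪯); (b) P and b(P) = P ∧ P^op are the unique maximal and minimal elements of (underline(P), ◁), while c(P) = P ∨ P^op and P are the unique maximal and minimal elements of (overline(P), ◀); (c) when X is finite, (underline(P), ◁) is a lattice with meet given by ∧ of Pre(X) and join of R₁, R₂ given by P ∧ (P^op ∨ R₁ ∨ R₂); (d) when X is finite, (overline(P), ◀) is a lattice with join given by ∨ of Pre(X) and meet of Q₁, Q₂ given by P ∨ (P^op ∧ Q₁ ∧ Q₂). -/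

import Mathlib

open scoped Classical

/-- A preorder on `X`, bundled as a reflexive and transitive relation. -/
structure Preo (X : Type*) where
  le : X → X → Prop
  le_refl : ∀ x, le x x
  le_trans : ∀ {x y z}, le x y → le y z → le x z

namespace Preo

variable {X : Type*}

/-- The refinement partial order `P ⪯ Q` on preorders: `x ≤_P y` implies `x ≤_Q y`. -/
def Le (P Q : Preo X) : Prop := ∀ ⦃a b⦄, P.le a b → Q.le a b

/-- The opposite preorder. -/
def op (P : Preo X) : Preo X where
  le a b := P.le b a
  le_refl x := P.le_refl x
  le_trans h h' := P.le_trans h' h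

/-- The meet (pointwise intersection) of two preorders. -/
def meet (P Q : Preo X) : Preo X where
  le a b := P.le a b ∧ Q.le a b
  le_refl x := ⟨P.le_refl x, Q.le_refl x⟩
  le_trans h h' := ⟨P.le_trans h.1 h'.1, Q.le_trans h.2 h'.2⟩

/-- The join of two preorders: zigzag chains, i.e. the reflexive-transitive closure
of the union of the two relations. -/
def join (P Q : Preo X) : Preo X where
  le a b := Relation.ReflTransGen (fun u v => P.le u v ∨ Q.le u v) a b
  le_refl _ := Relation.ReflTransGen.refl
  le_trans h h' := Relation.ReflTransGen.trans h h'

/-- The bubble relation: `a` and `b` lie in the same bubble of `P`. -/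
def bubRel (P : Preo X) (a b : X) : Prop := P.le a b ∧ P.le b a

/-- `R ◁ P` : `R` is a subdivision of `P`, i.e. `R ⪯ P` and `R = P ∧ (P^op ∨ R)`. -/
def Subdiv (R P : Preo X) : Prop := R.Le P ∧ R = P.meet (P.op.join R)

/-- `P ◀ Q` : `Q` is a contraction of `P`, i.e. `P ⪯ Q` and `Q = P ∨ (P^op ∧ Q)`. -/
def Contr (P Q : Preo X) : Prop := P.Le Q ∧ Q = P.join (P.op.meet Q)

/-- `K` is a convex subset for the preorder `P`. -/
def ConvexIn (P : Preo X) (K : Set X) : Prop :=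
  ∀ ⦃x y z⦄, x ∈ K → y ∈ K → P.le x z → P.le z y → z ∈ K

/-- `K` is connected for (the restriction to `K` of) the preorder `P`:
any two of its elements are joined by a zigzag chain of comparabilities within `K`. -/
def ConnectedIn (P : Preo X) (K : Set X) : Prop :=
  ∀ ⦃x y⦄, x ∈ K → y ∈ K →
    Relation.ReflTransGen (fun u v => u ∈ K ∧ v ∈ K ∧ (P.le u v ∨ P.le v u)) x y

/-- A total preorder. -/
def Total (P : Preo X) : Prop := ∀ a b, P.le a b ∨ P.le b a

/-- `L` is a linear extension of `P`: `L` is total, `P ⪯ L`, and the bubbles coincide. -/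
def IsLinExt (P L : Preo X) : Prop :=
  L.Total ∧ P.Le L ∧ ∀ a b, P.bubRel a b ↔ L.bubRel a b

/-- A finite down-set of the preorder `P`. -/
def IsDownset (P : Preo X) (A : Finset X) : Prop :=
  ∀ ⦃x y⦄, y ∈ A → P.le x y → x ∈ A

/-- A convex finite subset of the preorder `P`. -/
def ConvexF (P : Preo X) (C : Finset X) : Prop :=
  ∀ ⦃x y z⦄, x ∈ C → y ∈ C → P.le x z → P.le z y → z ∈ C

/-- The down-set generated by a finite set `C`. -/
noncomputable def downClosure [Fintype X] (P : Preo X) (C : Finset X) : Finset X :=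
  Finset.univ.filter (fun x => ∃ y ∈ C, P.le x y)

/-- The bubble of an element `a`. -/
noncomputable def bubble [Fintype X] (P : Preo X) (a : X) : Finset X :=
  Finset.univ.filter (fun x => P.le a x ∧ P.le x a)

/-- The set of bubbles of `P`. -/
noncomputable def bubbles [Fintype X] (P : Preo X) : Finset (Finset X) :=
  Finset.univ.image (fun a => P.bubble a)

/-- `R` is a positive sub-preorder of `P`: in any loop
`x = x₀ ≤_R x₁ ≥_P x₂ ≤_R ⋯ ≤_R x_{2k-1} ≥_P x_{2k} = x`,
every descending step `≥_P` is actually `≥_R`. -/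
def PositiveSub (R P : Preo X) : Prop :=
  ∀ (k : ℕ) (x : ℕ → X), x (2 * k) = x 0 →
    (∀ i < k, R.le (x (2 * i)) (x (2 * i + 1))) →
    (∀ i < k, P.le (x (2 * i + 2)) (x (2 * i + 1))) →
    ∀ i < k, R.le (x (2 * i + 2)) (x (2 * i + 1))

end Preo

section Submod

variable {I : Type*} [Fintype I] [DecidableEq I]

/-- A function `z : P(I) → ℝ ∪ {∞}` is submodular if
`z(S ∪ T) + z(S ∩ T) ≤ z(S) + z(T)` for all `S, T`. -/
def Submodular (z : Finset I → WithTop ℝ) : Prop :=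
  ∀ S T : Finset I, z (S ∪ T) + z (S ∩ T) ≤ z S + z T

/-- The corestriction `z_{/A}` : `U ↦ z(A ∪ U) − z(A)` (meaningful when `z A ≠ ⊤`). -/
noncomputable def coRes (z : Finset I → WithTop ℝ) (A U : Finset I) : WithTop ℝ :=
  z (A ∪ U) + ((-(WithTop.untopD 0 (z A)) : ℝ) : WithTop ℝ)

/-- The extended generalized permutahedron of `z`:
`x_I = z(I)` and `x_A ≤ z(A)` whenever `z(A) < ∞`. -/
def EGP (z : Finset I → WithTop ℝ) : Set (I → ℝ) :=
  {x | ((∑ i, x i : ℝ) : WithTop ℝ) = z Finset.univ ∧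
       ∀ A : Finset I, ((∑ i ∈ A, x i : ℝ) : WithTop ℝ) ≤ z A}

/-- `z` restricted to subsets of `C` decomposes as the product of its restrictions to `S`
and `T`, where `C = S ⊔ T`. -/
def SplitsAlong (z : Finset I → WithTop ℝ) (C S T : Finset I) : Prop :=
  Disjoint S T ∧ S ∪ T = C ∧ ∀ E ⊆ C, z E = z (E ∩ S) + z (E ∩ T)

/-- `z` restricted to subsets of `C` is indecomposable. -/
def IndecompOn (z : Finset I → WithTop ℝ) (C : Finset I) : Prop :=
  ∀ S T : Finset I, S.Nonempty → T.Nonempty → ¬ SplitsAlong z C S T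

/-- `fam` is the partition underlying a factorization of `z` into indecomposable
extended Boolean functions. -/
def IsIndecompFactorization (z : Finset I → WithTop ℝ) (fam : Finset (Finset I)) : Prop :=
  (∀ B ∈ fam, B.Nonempty) ∧
  (∀ B ∈ fam, ∀ B' ∈ fam, B ≠ B' → Disjoint B B') ∧
  fam.sup id = Finset.univ ∧
  (∀ E : Finset I, z E = ∑ B ∈ fam, z (E ∩ B)) ∧
  ∀ B ∈ fam, IndecompOn z B

/-- A family of finite subsets of `I` forming a topology on `I`. -/
def IsTopologyFam (F : Set (Finset I)) : Prop :=
  ∅ ∈ F ∧ Finset.univ ∈ F ∧ (∀ A ∈ F, ∀ B ∈ F, A ∪ B ∈ F) ∧ ∀ A ∈ F, ∀ B ∈ F, A ∩ B ∈ F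

/-- The preorder `P` is compatible with the submodular function `z`. -/
def Compatible (z : Finset I → WithTop ℝ) (P : Preo I) : Prop :=
  (∀ A : Finset I, P.IsDownset A → z A ≠ ⊤) ∧
  ∀ A B : Finset I, P.IsDownset A → P.IsDownset B → A ⊆ B →
    ∀ C₁ C₂ : Finset I, Disjoint C₁ C₂ → C₁ ∪ C₂ = B \ A →
      (∀ x ∈ C₁, ∀ y ∈ C₂, ¬ P.le x y ∧ ¬ P.le y x) →
      ∀ U ⊆ B \ A, coRes z A U = coRes z A (U ∩ C₁) + coRes z A (U ∩ C₂)

/-- For a convex subset `C` of `P`, the function `z_C : U ↦ z(A ∪ U) − z(A)`, where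
`A = (↓C) \ C` with `↓C` the down-set generated by `C`. -/
noncomputable def zConv (z : Finset I → WithTop ℝ) (P : Preo I) (C U : Finset I) :
    WithTop ℝ :=
  coRes z (P.downClosure C \ C) U

/-- The preorder `P` conforms to the submodular function `z`: it is compatible with `z`
and every product decomposition of `z_C`, for `C` convex in `P`, comes from a
disconnected decomposition of the preorder induced on `C`. -/
def Conforms (z : Finset I → WithTop ℝ) (P : Preo I) : Prop :=
  Compatible z P ∧
  ∀ C : Finset I, P.ConvexF C →
    ∀ C₁ C₂ : Finset I, Disjoint C₁ C₂ → C₁ ∪ C₂ = C →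
      (∀ U ⊆ C, zConv z P C U = zConv z P C (U ∩ C₁) + zConv z P C (U ∩ C₂)) →
      ∀ x ∈ C₁, ∀ y ∈ C₂, ¬ P.le x y ∧ ¬ P.le y x

/-- The preorder `pre(z)` associated to `z`: `x ≤ y` iff every `A` with `z(A) < ∞`
("open set") containing `y` contains `x`. -/
def preZ (z : Finset I → WithTop ℝ) : Preo I where
  le x y := ∀ A : Finset I, z A ≠ ⊤ → y ∈ A → x ∈ A
  le_refl _ := fun _ _ h => h
  le_trans h h' := fun A hA hy => h A hA (h' A hA hy)

/-- The preorder associated (by the Alexandroff correspondence) to a family of subsets. -/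
def preOfFam (F : Set (Finset I)) : Preo I where
  le x y := ∀ A ∈ F, y ∈ A → x ∈ A
  le_refl _ := fun _ _ h => h
  le_trans h h' := fun A hA hy => h A hA (h' A hA hy)

/-- `Alin(P, z)`: the affine space cut out by `x_A = z(A)` for `A` a down-set of `P`. -/
def Alin (z : Finset I → WithTop ℝ) (P : Preo I) : Set (I → ℝ) :=
  {x | ∀ A : Finset I, P.IsDownset A → ((∑ i ∈ A, x i : ℝ) : WithTop ℝ) = z A}

/-- `AlinBu(P, z)`: the affine space cut out by `x_C = z_C(C)` for `C` a bubble of `P`. -/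
def AlinBu (z : Finset I → WithTop ℝ) (P : Preo I) : Set (I → ℝ) :=
  {x | ∀ a : I, ((∑ i ∈ P.bubble a, x i : ℝ) : WithTop ℝ) = zConv z P (P.bubble a) (P.bubble a)}

/-- `Φ_z(P)`: the (possibly empty) face of `Π(z)` cut out by the equalities `x_A = z(A)`
for `A` a down-set of `P`. -/
def Phi (z : Finset I → WithTop ℝ) (P : Preo I) : Set (I → ℝ) :=
  {x | x ∈ EGP z ∧ ∀ A : Finset I, P.IsDownset A → ((∑ i ∈ A, x i : ℝ) : WithTop ℝ) = z A}

/-- `Ψ_z(G)`: the family of sets `A` with `z(A) < ∞` on which `x_A = z(A)` for all `x ∈ G`. -/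
def PsiFam (z : Finset I → WithTop ℝ) (G : Set (I → ℝ)) : Set (Finset I) :=
  {A | z A ≠ ⊤ ∧ ∀ x ∈ G, ((∑ i ∈ A, x i : ℝ) : WithTop ℝ) = z A}

/-- `Ψ_z(G)` as a preorder. -/
def PsiPre (z : Finset I → WithTop ℝ) (G : Set (I → ℝ)) : Preo I :=
  preOfFam (PsiFam z G)

/-- `z_P = ∏_{C ∈ b(P)} z_C`: the product over all bubbles of `P`. -/
noncomputable def zP (z : Finset I → WithTop ℝ) (P : Preo I) : Finset I → WithTop ℝ :=
  fun E => ∑ C ∈ P.bubbles, zConv z P C (E ∩ C)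

/-- The restriction `z|_S` of `z` to subsets of `S`. -/
def restrictFn (z : Finset I → WithTop ℝ) (S : Finset I) :
    Finset {x : I // x ∈ S} → WithTop ℝ :=
  fun U => z (U.map (Function.Embedding.subtype fun x => x ∈ S))

/-- The corestriction `z_{/S}` of `z`, on subsets of `I ∖ S`. -/
noncomputable def coresFn (z : Finset I → WithTop ℝ) (S : Finset I) :
    Finset {x : I // x ∉ S} → WithTop ℝ :=
  fun U => z (S ∪ U.map (Function.Embedding.subtype fun x => x ∉ S)) +
    ((-(WithTop.untopD 0 (z S)) : ℝ) : WithTop ℝ)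

/-- The restriction `P|_S` of a preorder to `S`. -/
def restrictPre (P : Preo I) (S : Finset I) : Preo {x : I // x ∈ S} where
  le a b := P.le a b
  le_refl a := P.le_refl a
  le_trans h h' := P.le_trans h h'

/-- The corestriction `P_{/S}` of a preorder, on `I ∖ S`. -/
def coresPre (P : Preo I) (S : Finset I) : Preo {x : I // x ∉ S} where
  le a b := P.le a b
  le_refl a := P.le_refl a
  le_trans h h' := P.le_trans h h'

end Submod
theorem Relation.ReflTransGen.mono_imp {α : Type*} {r p : α → α → Prop} {a b : α}
    (h : ∀ a b, r a b → p a b) (hab : Relation.ReflTransGen r a b) :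
    Relation.ReflTransGen p a b :=
  Relation.ReflTransGen.mono h a b hab

namespace Preo

variable {X : Type*}

theorem ext' {P Q : Preo X} (h : ∀ a b, P.le a b ↔ Q.le a b) : P = Q := by
  cases P with
  | mk l r t =>
    cases Q with
    | mk l' r' t' =>
      have : l = l' := by funext a b; exact propext (h a b)
      subst this
      rfl

theorem le_of_chain {Q : Preo X} {r : X → X → Prop} (h : ∀ u v, r u v → Q.le u v) :
    ∀ {a b : X}, Relation.ReflTransGen r a b → Q.le a b := by
  intro a b hab
  induction hab with
  | refl => exact Q.le_refl _
  | tail _ st ih => exact Q.le_trans ih (h _ _ st)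

theorem rev_le_of_chain {Q : Preo X} {r : X → X → Prop} (h : ∀ u v, r u v → Q.le v u) :
    ∀ {a b : X}, Relation.ReflTransGen r a b → Q.le b a := by
  intro a b hab
  induction hab with
  | refl => exact Q.le_refl _
  | tail _ st ih => exact Q.le_trans (h _ _ st) ih

theorem chain_bind {r p : X → X → Prop} (h : ∀ u v, r u v → Relation.ReflTransGen p u v) :
    ∀ {a b : X}, Relation.ReflTransGen r a b → Relation.ReflTransGen p a b := by
  intro a b hab
  induction hab with
  | refl => exact .refl
  | tail _ st ih => exact ih.trans (h _ _ st)

/-- The chain characterization of `Subdiv`. -/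
theorem subdiv_iff {R P : Preo X} :
    Subdiv R P ↔ R.Le P ∧ ∀ a b, P.le a b →
      Relation.ReflTransGen (fun u v => P.le v u ∨ R.le u v) a b → R.le a b := by
  constructor
  · rintro ⟨h1, h2⟩
    refine ⟨h1, fun a b hp hj => ?_⟩
    have : (P.meet (P.op.join R)).le a b := ⟨hp, hj⟩
    rw [← h2] at this
    exact this
  · rintro ⟨h1, h2⟩
    refine ⟨h1, ext' fun a b => ?_⟩
    constructor
    · intro h
      exact ⟨h1 h, Relation.ReflTransGen.single (Or.inr h)⟩
    · intro h
      exact h2 a b h.1 h.2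

/-- The chain characterization of `Contr`. -/
theorem contr_iff {P Q : Preo X} :
    Contr P Q ↔ P.Le Q ∧ ∀ a b, Q.le a b →
      Relation.ReflTransGen (fun u v => P.le u v ∨ (P.le v u ∧ Q.le u v)) a b := by
  constructor
  · rintro ⟨h1, h2⟩
    refine ⟨h1, fun a b hq => ?_⟩
    rw [h2] at hq
    exact hq
  · rintro ⟨h1, h2⟩
    refine ⟨h1, ext' fun a b => ?_⟩
    constructor
    · intro h
      exact h2 a b h
    · intro h
      exact le_of_chain (fun u v hv => hv.elim (fun h' => h1 h') And.right) h

theorem subdiv_refl (R : Preo X) : Subdiv R R :=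
  subdiv_iff.mpr ⟨fun _ _ h => h, fun _ _ h _ => h⟩

theorem contr_refl (Q : Preo X) : Contr Q Q :=
  contr_iff.mpr ⟨fun _ _ h => h, fun _ _ h => Relation.ReflTransGen.single (Or.inl h)⟩

/-- Path-conversion lemma for transitivity of `Subdiv`. -/
theorem convert {P S R : Preo X}
    (hD : ∀ a b, P.le a b →
      Relation.ReflTransGen (fun u v => P.le v u ∨ S.le u v) a b → S.le a b)
    (hRS : R.Le S) :
    ∀ {a b : X}, Relation.ReflTransGen (fun u v => P.le v u ∨ R.le u v) a b →
      Relation.ReflTransGen (fun u v => P.le v u ∨ S.le u v) b a →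
      Relation.ReflTransGen (fun u v => S.le v u ∨ R.le u v) a b := by
  intro a b h
  induction h with
  | refl => intro _; exact .refl
  | @tail c b h' st ih =>
    intro back
    rcases st with hpc | hrc
    · have hpath : Relation.ReflTransGen (fun u v => P.le v u ∨ S.le u v) b c :=
        back.trans (Relation.ReflTransGen.mono_imp
          (fun u v hv => hv.imp id (fun hr => hRS hr)) h')
      have hS : S.le b c := hD _ _ hpc hpath
      have back' : Relation.ReflTransGen (fun u v => P.le v u ∨ S.le u v) c a :=
        Relation.ReflTransGen.head (Or.inl hpc) back
      exact (ih back').tail (Or.inl hS)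
    · have back' : Relation.ReflTransGen (fun u v => P.le v u ∨ S.le u v) c a :=
        Relation.ReflTransGen.head (Or.inr (hRS hrc)) back
      exact (ih back').tail (Or.inr hrc)

theorem subdiv_trans {R S P : Preo X} (h1 : Subdiv R S) (h2 : Subdiv S P) : Subdiv R P := by
  rw [subdiv_iff] at h1 h2 ⊢
  obtain ⟨hRS, dRS⟩ := h1
  obtain ⟨hSP, dSP⟩ := h2
  refine ⟨fun a b h => hSP (hRS h), fun a b hp hj => ?_⟩
  have path2 := convert dSP hRS hj (Relation.ReflTransGen.single (Or.inl hp))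
  have hS : S.le a b := dSP a b hp
    (Relation.ReflTransGen.mono_imp (fun u v hv => hv.imp id (fun h => hRS h)) hj)
  exact dRS a b hS path2

/-- Path-reversal lemma for transitivity of `Contr`. -/
theorem revchain {P Q T : Preo X} (hPQ : P.Le Q) (hQT : Q.Le T) :
    ∀ {y x : X},
      Relation.ReflTransGen (fun u v => P.le u v ∨ (P.le v u ∧ Q.le u v)) y x →
      T.le x y →
      Relation.ReflTransGen (fun u v => P.le u v ∨ (P.le v u ∧ T.le u v)) x y := by
  intro y x h
  induction h with
  | refl => intro _; exact .refl
  | @tail c x h' st ih =>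
    intro hT
    have stepT : ∀ u v, (P.le u v ∨ (P.le v u ∧ Q.le u v)) → T.le u v :=
      fun u v hv => hv.elim (fun h' => hQT (hPQ h')) (fun h' => hQT h'.2)
    have hcx : T.le c x := stepT _ _ st
    have hyc : T.le y c := le_of_chain stepT h'
    have hcy : T.le c y := T.le_trans hcx hT
    have hxc : T.le x c := T.le_trans hT hyc
    have first : Relation.ReflTransGen
        (fun u v => P.le u v ∨ (P.le v u ∧ T.le u v)) x c := by
      rcases st with hp | hp
      · exact Relation.ReflTransGen.single (Or.inr ⟨hp, hxc⟩)
      · exact Relation.ReflTransGen.single (Or.inl hp.1)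
    exact first.trans (ih hcy)

theorem contr_trans {P Q T : Preo X} (h1 : Contr P Q) (h2 : Contr Q T) : Contr P T := by
  rw [contr_iff] at h1 h2 ⊢
  obtain ⟨hPQ, cPQ⟩ := h1
  obtain ⟨hQT, cQT⟩ := h2
  refine ⟨fun a b h => hQT (hPQ h), fun a b ht => ?_⟩
  refine chain_bind (fun u v hv => ?_) (cQT a b ht)
  rcases hv with hq | ⟨hq, ht'⟩
  · exact Relation.ReflTransGen.mono_imp
      (fun u v hv => hv.imp id (fun h => ⟨h.1, hQT h.2⟩)) (cPQ u v hq)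
  · exact revchain hPQ hQT (cPQ v u hq) ht'

theorem subdiv_of_le {R₁ R₂ P : Preo X} (h1 : Subdiv R₁ P) (h2 : R₂.Le P)
    (h : R₁.Le R₂) : Subdiv R₁ R₂ := by
  rw [subdiv_iff] at h1 ⊢
  refine ⟨h, fun a b hr2 hj => ?_⟩
  exact h1.2 a b (h2 hr2)
    (Relation.ReflTransGen.mono_imp (fun u v hv => hv.imp (fun h' => h2 h') id) hj)

theorem contr_of_le {P Q₁ Q₂ : Preo X} (h1 : P.Le Q₁) (h2 : Contr P Q₂)
    (h : Q₁.Le Q₂) : Contr Q₁ Q₂ := by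
  rw [contr_iff] at h2 ⊢
  refine ⟨h, fun a b hq2 => ?_⟩
  exact Relation.ReflTransGen.mono_imp
    (fun u v hv => hv.imp (fun h' => h1 h') (fun h' => ⟨h1 h'.1, h'.2⟩))
    (h2.2 a b hq2)

theorem subdiv_bub (P : Preo X) : Subdiv (P.meet P.op) P :=
  subdiv_iff.mpr ⟨fun _ _ h => h.1, fun a b hp hj =>
    ⟨hp, rev_le_of_chain (Q := P)
      (r := fun u v => P.le v u ∨ (P.meet P.op).le u v)
      (fun _ _ hv => hv.elim id (fun h => h.2)) hj⟩⟩

theorem bub_le {R P : Preo X} (hR : Subdiv R P) : (P.meet P.op).Le R :=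
  fun a b h => (subdiv_iff.mp hR).2 a b h.1 (Relation.ReflTransGen.single (Or.inl h.2))

theorem contr_c (P : Preo X) : Contr P (P.join P.op) :=
  contr_iff.mpr ⟨fun _ _ h => Relation.ReflTransGen.single (Or.inl h),
    fun _ _ hq => hq.mono_imp
      (fun _ _ hv => hv.imp id (fun h => ⟨h, Relation.ReflTransGen.single (Or.inr h)⟩))⟩

theorem le_c {P Q : Preo X} (hQ : Contr P Q) : Q.Le (P.join P.op) :=
  fun a b h => ((contr_iff.mp hQ).2 a b h).mono_imp
    (fun _ _ hv => hv.imp id And.left)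

end Preo


/-- `◁` and `◀` are partial orders on `Pre(X)`. For fixed `P`:
(a) on `underline(P)` (resp. `overline(P)`) the order `◁` (resp. `◀`) is induced from `⪯`;
(b) `P` and `b(P) = P ∧ P^op` are the maximum and minimum of `(underline(P), ◁)`, and
`c(P) = P ∨ P^op` and `P` are the maximum and minimum of `(overline(P), ◀)`;
(c) for finite `X`, `(underline(P), ◁)` is a lattice with meet `∧` and join
`R₁, R₂ ↦ P ∧ (P^op ∨ R₁ ∨ R₂)`;
(d) for finite `X`, `(overline(P), ◀)` is a lattice with join `∨` and meet
`Q₁, Q₂ ↦ P ∨ (P^op ∧ Q₁ ∧ Q₂)`. -/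
theorem subdiv_contr_lattices
    {X : Type*} (P : Preo X) :
    IsPartialOrder (Preo X) Preo.Subdiv ∧
    IsPartialOrder (Preo X) Preo.Contr ∧
    -- (a)
    (∀ R₁ R₂ : Preo X, Preo.Subdiv R₁ P → Preo.Subdiv R₂ P →
      (Preo.Subdiv R₁ R₂ ↔ R₁.Le R₂)) ∧
    (∀ Q₁ Q₂ : Preo X, Preo.Contr P Q₁ → Preo.Contr P Q₂ →
      (Preo.Contr Q₁ Q₂ ↔ Q₁.Le Q₂)) ∧
    -- (b)
    Preo.Subdiv (P.meet P.op) P ∧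
    (∀ R : Preo X, Preo.Subdiv R P → Preo.Subdiv (P.meet P.op) R) ∧
    Preo.Contr P (P.join P.op) ∧
    (∀ Q : Preo X, Preo.Contr P Q → Preo.Contr Q (P.join P.op)) ∧
    -- (c)
    (Finite X → ∀ R₁ R₂ : Preo X, Preo.Subdiv R₁ P → Preo.Subdiv R₂ P →
      Preo.Subdiv (R₁.meet R₂) P ∧
      Preo.Subdiv (R₁.meet R₂) R₁ ∧ Preo.Subdiv (R₁.meet R₂) R₂ ∧
      (∀ S : Preo X, Preo.Subdiv S P → Preo.Subdiv S R₁ → Preo.Subdiv S R₂ →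
        Preo.Subdiv S (R₁.meet R₂)) ∧
      Preo.Subdiv (P.meet ((P.op.join R₁).join R₂)) P ∧
      Preo.Subdiv R₁ (P.meet ((P.op.join R₁).join R₂)) ∧
      Preo.Subdiv R₂ (P.meet ((P.op.join R₁).join R₂)) ∧
      (∀ S : Preo X, Preo.Subdiv S P → Preo.Subdiv R₁ S → Preo.Subdiv R₂ S →
        Preo.Subdiv (P.meet ((P.op.join R₁).join R₂)) S)) ∧
    -- (d)
    (Finite X → ∀ Q₁ Q₂ : Preo X, Preo.Contr P Q₁ → Preo.Contr P Q₂ →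
      Preo.Contr P (Q₁.join Q₂) ∧
      Preo.Contr Q₁ (Q₁.join Q₂) ∧ Preo.Contr Q₂ (Q₁.join Q₂) ∧
      (∀ T : Preo X, Preo.Contr P T → Preo.Contr Q₁ T → Preo.Contr Q₂ T →
        Preo.Contr (Q₁.join Q₂) T) ∧
      Preo.Contr P (P.join (P.op.meet (Q₁.meet Q₂))) ∧
      Preo.Contr (P.join (P.op.meet (Q₁.meet Q₂))) Q₁ ∧
      Preo.Contr (P.join (P.op.meet (Q₁.meet Q₂))) Q₂ ∧
      (∀ T : Preo X, Preo.Contr P T → Preo.Contr T Q₁ → Preo.Contr T Q₂ →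
        Preo.Contr T (P.join (P.op.meet (Q₁.meet Q₂))))) := by
  classical
  have asub : ∀ R₁ R₂ : Preo X, Preo.Subdiv R₁ P → Preo.Subdiv R₂ P →
      (Preo.Subdiv R₁ R₂ ↔ R₁.Le R₂) :=
    fun R₁ R₂ h1 h2 => ⟨fun h => h.1, fun h => Preo.subdiv_of_le h1 h2.1 h⟩
  have acon : ∀ Q₁ Q₂ : Preo X, Preo.Contr P Q₁ → Preo.Contr P Q₂ →
      (Preo.Contr Q₁ Q₂ ↔ Q₁.Le Q₂) :=
    fun Q₁ Q₂ h1 h2 => ⟨fun h => h.1, fun h => Preo.contr_of_le h1.1 h2 h⟩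
  refine ⟨?_, ?_, asub, acon, Preo.subdiv_bub P, ?_, Preo.contr_c P, ?_, ?_, ?_⟩
  · exact { refl := Preo.subdiv_refl,
            trans := fun _ _ _ => Preo.subdiv_trans,
            antisymm := fun _ _ h1 h2 =>
              Preo.ext' fun a b => ⟨fun h => h1.1 h, fun h => h2.1 h⟩ }
  · exact { refl := Preo.contr_refl,
            trans := fun _ _ _ => Preo.contr_trans,
            antisymm := fun _ _ h1 h2 =>
              Preo.ext' fun a b => ⟨fun h => h1.1 h, fun h => h2.1 h⟩ }
  · exact fun R hR => Preo.subdiv_of_le (Preo.subdiv_bub P) hR.1 (Preo.bub_le hR)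
  · exact fun Q hQ => Preo.contr_of_le hQ.1 (Preo.contr_c P) (Preo.le_c hQ)
  · -- part (c)
    intro _ R₁ R₂ h1 h2
    have h1' := Preo.subdiv_iff.mp h1
    have h2' := Preo.subdiv_iff.mp h2
    have hMP : Preo.Subdiv (R₁.meet R₂) P := by
      refine Preo.subdiv_iff.mpr ⟨fun a b h => h1'.1 h.1, fun a b hp hj => ?_⟩
      exact ⟨h1'.2 a b hp (hj.mono_imp
          (fun u v hv => hv.imp id And.left)),
        h2'.2 a b hp (hj.mono_imp
          (fun u v hv => hv.imp id And.right))⟩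
    have hJP : Preo.Subdiv (P.meet ((P.op.join R₁).join R₂)) P := by
      refine Preo.subdiv_iff.mpr ⟨fun a b h => h.1, fun a b hp hj => ⟨hp, ?_⟩⟩
      refine Preo.le_of_chain (Q := (P.op.join R₁).join R₂) (fun u v hv => ?_) hj
      exact hv.elim
        (fun h => Relation.ReflTransGen.single
          (Or.inl (Relation.ReflTransGen.single (Or.inl h))))
        (fun h => h.2)
    have hR1J : R₁.Le (P.meet ((P.op.join R₁).join R₂)) :=
      fun a b h => ⟨h1'.1 h, Relation.ReflTransGen.single
        (Or.inl (Relation.ReflTransGen.single (Or.inr h)))⟩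
    have hR2J : R₂.Le (P.meet ((P.op.join R₁).join R₂)) :=
      fun a b h => ⟨h2'.1 h, Relation.ReflTransGen.single (Or.inr h)⟩
    refine ⟨hMP, Preo.subdiv_of_le hMP h1'.1 (fun a b h => h.1),
      Preo.subdiv_of_le hMP h2'.1 (fun a b h => h.2),
      fun S hSP hS1 hS2 => Preo.subdiv_of_le hSP hMP.1
        (fun a b h => ⟨hS1.1 h, hS2.1 h⟩),
      hJP, Preo.subdiv_of_le h1 hJP.1 hR1J, Preo.subdiv_of_le h2 hJP.1 hR2J,
      fun S hSP hS1 hS2 => ?_⟩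
    refine Preo.subdiv_of_le hJP hSP.1 (fun a b h => ?_)
    refine (Preo.subdiv_iff.mp hSP).2 a b h.1 (Preo.chain_bind (fun u v hv => ?_) h.2)
    exact hv.elim
      (fun h => h.mono_imp
        (fun u v hv => hv.imp id (fun hr => hS1.1 hr)))
      (fun h => Relation.ReflTransGen.single (Or.inr (hS2.1 h)))
  · -- part (d)
    intro _ Q₁ Q₂ h1 h2
    have h1' := Preo.contr_iff.mp h1
    have h2' := Preo.contr_iff.mp h2
    have hPJ : Preo.Contr P (Q₁.join Q₂) := by
      refine Preo.contr_iff.mpr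
        ⟨fun a b h => Relation.ReflTransGen.single (Or.inl (h1'.1 h)),
          fun a b hq => Preo.chain_bind (fun u v hv => ?_) hq⟩
      exact hv.elim
        (fun h => (h1'.2 u v h).mono_imp
          (fun u v hv => hv.imp id (fun h' =>
            ⟨h'.1, Relation.ReflTransGen.single (Or.inl h'.2)⟩)))
        (fun h => (h2'.2 u v h).mono_imp
          (fun u v hv => hv.imp id (fun h' =>
            ⟨h'.1, Relation.ReflTransGen.single (Or.inr h'.2)⟩)))
    have hPM : Preo.Contr P (P.join (P.op.meet (Q₁.meet Q₂))) := by
      refine Preo.contr_iff.mpr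
        ⟨fun a b h => Relation.ReflTransGen.single (Or.inl h), fun a b hm => ?_⟩
      exact hm.mono_imp
        (fun u v hv => hv.imp id (fun h =>
          ⟨h.1, Relation.ReflTransGen.single (Or.inr h)⟩))
    have hMQ1 : (P.join (P.op.meet (Q₁.meet Q₂))).Le Q₁ :=
      fun a b h => Preo.le_of_chain
        (fun u v hv => hv.elim (fun h' => h1'.1 h') (fun h' => h'.2.1)) h
    have hMQ2 : (P.join (P.op.meet (Q₁.meet Q₂))).Le Q₂ :=
      fun a b h => Preo.le_of_chain
        (fun u v hv => hv.elim (fun h' => h2'.1 h') (fun h' => h'.2.2)) h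
    refine ⟨hPJ,
      Preo.contr_of_le h1'.1 hPJ
        (fun a b h => Relation.ReflTransGen.single (Or.inl h)),
      Preo.contr_of_le h2'.1 hPJ
        (fun a b h => Relation.ReflTransGen.single (Or.inr h)),
      fun T hPT hT1 hT2 => Preo.contr_of_le hPJ.1 hPT
        (fun a b h => Preo.le_of_chain
          (fun u v hv => hv.elim (fun h' => hT1.1 h') (fun h' => hT2.1 h')) h),
      hPM,
      Preo.contr_of_le hPM.1 h1 hMQ1,
      Preo.contr_of_le hPM.1 h2 hMQ2,
      fun T hPT hT1 hT2 => Preo.contr_of_le hPT.1 hPM (fun a b h => ?_)⟩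
    exact ((Preo.contr_iff.mp hPT).2 a b h).mono_imp
      (fun u v hv => hv.imp id (fun h' => ⟨h'.1, hT1.1 h'.2, hT2.1 h'.2⟩))
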